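/- Let a, b, c be real numbers with 0 < a < b < c. Define the cubic polynomials P(y) = (y − a)(y − b)·(−y/6 − (a+b)/6) and N(y) = (y − b)(y − c)·(y/6 + (b+c)/6). Then P''(y) = −y and N''(y) = y for all y, P(b) = N(b) = 0, and the derivative-matching condition P'(b) = N'(b) holds if and only if c² + b·c − 4b² + a·b + a² = 0. -/

import Mathlib

lemma deriv_cubic (p q r s : ℝ) :
    deriv (fun y : ℝ => p * y ^ 3 + q * y ^ 2 + r * y + s) =
      fun y => 3 * p * y ^ 2 + 2 * q * y + r := by
  funext y
  have h : HasDerivAt (fun y : ℝ => p * y ^ 3 + q * y ^ 2 + r * y + s)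
      (3 * p * y ^ 2 + 2 * q * y + r) y := by
    have := (((hasDerivAt_pow 3 y).const_mul p).add
      ((hasDerivAt_pow 2 y).const_mul q)).add
      (((hasDerivAt_id y).const_mul r).add (hasDerivAt_const y s))
    convert this using 1
    · rfl
    · rfl
    · funext x; simp only [id, Pi.add_apply]; ring
    · push_cast; ring
  exact h.deriv

/-- C¹ gluing of successive cubic arcs for the limit ODE
`Ỹ'' + sign(Ỹ)·y = 0` (`k = 1`, `l = 0`): with `0 < a < b < c`,
`P(y) = (y-a)(y-b)(-y/6 - (a+b)/6)` and `N(y) = (y-b)(y-c)(y/6 + (b+c)/6)`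
satisfy `P'' = -y`, `N'' = y`, `P(b) = N(b) = 0`, and `P'(b) = N'(b)` iff
`c² + bc - 4b² + ab + a² = 0`. -/
theorem stmt14 (a b c : ℝ) (ha : 0 < a) (hab : a < b) (hbc : b < c) :
    let P : ℝ → ℝ := fun y => (y - a) * (y - b) * (-y / 6 - (a + b) / 6)
    let N : ℝ → ℝ := fun y => (y - b) * (y - c) * (y / 6 + (b + c) / 6)
    (∀ y : ℝ, deriv (deriv P) y = -y) ∧
    (∀ y : ℝ, deriv (deriv N) y = y) ∧
    P b = 0 ∧ N b = 0 ∧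
    (deriv P b = deriv N b ↔
      c ^ 2 + b * c - 4 * b ^ 2 + a * b + a ^ 2 = 0) := by
  intro P N
  have hP : P = fun y : ℝ => (-(1/6)) * y ^ 3 + 0 * y ^ 2 +
      ((a ^ 2 + a * b + b ^ 2) / 6) * y + (-(a * b * (a + b) / 6)) := by
    funext y; show (y - a) * (y - b) * (-y / 6 - (a + b) / 6) = _; ring
  have hN : N = fun y : ℝ => (1/6) * y ^ 3 + 0 * y ^ 2 +
      (-((b ^ 2 + b * c + c ^ 2) / 6)) * y + (b * c * (b + c) / 6) := by
    funext y; show (y - b) * (y - c) * (y / 6 + (b + c) / 6) = _; ring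
  have hP1 : deriv P = fun y : ℝ =>
      3 * (-(1/6)) * y ^ 2 + 2 * 0 * y + (a ^ 2 + a * b + b ^ 2) / 6 := by
    rw [hP, deriv_cubic]
  have hN1 : deriv N = fun y : ℝ =>
      3 * (1/6) * y ^ 2 + 2 * 0 * y + (-((b ^ 2 + b * c + c ^ 2) / 6)) := by
    rw [hN, deriv_cubic]
  have hP1' : deriv P = fun y : ℝ =>
      (3 * (-(1/6))) * y ^ 3 * 0 + (3 * (-(1/6))) * y ^ 2 + 0 * y +
        (a ^ 2 + a * b + b ^ 2) / 6 := by
    rw [hP1]; funext y; ring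
  have hP2 : ∀ y : ℝ, deriv (deriv P) y = -y := by
    intro y
    have : deriv P = fun y : ℝ => 0 * y ^ 3 + (-(1/2)) * y ^ 2 + 0 * y +
        (a ^ 2 + a * b + b ^ 2) / 6 := by
      rw [hP1]; funext y; ring
    rw [this, deriv_cubic]; ring
  have hN2 : ∀ y : ℝ, deriv (deriv N) y = y := by
    intro y
    have : deriv N = fun y : ℝ => 0 * y ^ 3 + (1/2) * y ^ 2 + 0 * y +
        (-((b ^ 2 + b * c + c ^ 2) / 6)) := by
      rw [hN1]; funext y; ring
    rw [this, deriv_cubic]; ring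
  refine ⟨hP2, hN2, by show (b - a) * (b - b) * _ = 0; ring,
    by show (b - b) * (b - c) * _ = 0; ring, ?_⟩
  rw [hP1, hN1]
  constructor
  · intro h; nlinarith [h]
  · intro h; nlinarith [h]
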